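/- Let K be a field, S = K[x_1,…,x_n], and let I ⊆ S be the PLP-polymatroidal ideal of type (a,b|α,β). Then for every integer k ≥ 1, the power I^k equals the PLP-polymatroidal ideal of type (ka, kb | kα, kβ); that is, I^k is generated by the monomials x^u with u ∈ ℕ^n satisfying k·a_i ≤ u_i ≤ k·b_i for all i and k·α_i ≤ u_1+⋯+u_i ≤ k·β_i for all i. -/

import Mathlib

open Finset MvPolynomial

/-- The PLP-polymatroidal ideal of type `(a, b | α, β)`. -/
noncomputable def PLPideal (K : Type*) [Field K] {n : ℕ} (a b α β : Fin n → ℕ) :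
    Ideal (MvPolynomial (Fin n) K) :=
  Ideal.span { m : MvPolynomial (Fin n) K | ∃ u : Fin n → ℕ,
    (∀ i, a i ≤ u i ∧ u i ≤ b i) ∧
    (∀ i, α i ≤ ∑ j ∈ Finset.Iic i, u j ∧ (∑ j ∈ Finset.Iic i, u j) ≤ β i) ∧
    m = ∏ i, (X i : MvPolynomial (Fin n) K) ^ u i }

/- ### Auxiliary arithmetic lemmas -/

lemma plp_div_lb (k p c u : ℕ) (hk : 0 < k) (h : k * c ≤ u) :
    p / k + c ≤ (p + u) / k := by
  have h1 : (p + k * c) / k = p / k + c := Nat.add_mul_div_left _ _ hk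
  calc p / k + c = (p + k * c) / k := h1.symm
    _ ≤ (p + u) / k := Nat.div_le_div_right (by omega)

lemma plp_div_ub (k p c u : ℕ) (hk : 0 < k) (h : u ≤ k * c) :
    (p + u) / k ≤ p / k + c := by
  rw [Nat.div_le_iff_le_mul_add_pred hk, Nat.mul_add]
  have h1 := Nat.div_add_mod p k
  have h2 : p % k < k := Nat.mod_lt _ hk
  omega

lemma plp_mul_tsub_le (m u b : ℕ) (h : u ≤ (m + 1) * b) :
    (m + 1) * (u - m * b) ≤ u := by
  rcases Nat.le_total u (m * b) with hle | hle
  · have h0 : u - m * b = 0 := by omega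
    rw [h0]
    simp
  · have e1 : (m + 1) * b = m * b + b := by ring
    have e2 : (m + 1) * (u - m * b) = m * (u - m * b) + (u - m * b) := by ring
    have h3 : m * (u - m * b) ≤ m * b := Nat.mul_le_mul_left _ (by omega)
    omega

lemma plp_le_mul_tsub (m u a : ℕ) (h : (m + 1) * a ≤ u) :
    u ≤ (m + 1) * (u - m * a) := by
  have e1 : (m + 1) * a = m * a + a := by ring
  have e2 : (m + 1) * (u - m * a) = m * (u - m * a) + (u - m * a) := by ring
  have h3 : m * a ≤ m * (u - m * a) := Nat.mul_le_mul_left _ (by omega)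
  omega

/- ### The decomposition lemma -/

lemma plp_decomp {n : ℕ} (m : ℕ) (a b α β : Fin n → ℕ) (u : Fin n → ℕ)
    (hab : ∀ i, (m + 1) * a i ≤ u i ∧ u i ≤ (m + 1) * b i)
    (hαβ : ∀ i, (m + 1) * α i ≤ ∑ j ∈ Iic i, u j ∧ (∑ j ∈ Iic i, u j) ≤ (m + 1) * β i) :
    ∃ v w : Fin n → ℕ, (∀ i, u i = v i + w i) ∧
      (∀ i, a i ≤ v i ∧ v i ≤ b i) ∧
      (∀ i, α i ≤ ∑ j ∈ Iic i, v j ∧ (∑ j ∈ Iic i, v j) ≤ β i) ∧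
      (∀ i, m * a i ≤ w i ∧ w i ≤ m * b i) ∧
      (∀ i, m * α i ≤ ∑ j ∈ Iic i, w j ∧ (∑ j ∈ Iic i, w j) ≤ m * β i) := by
  set k := m + 1 with hkdef
  have hk : 0 < k := Nat.succ_pos m
  set v : Fin n → ℕ := fun i => (∑ j ∈ Iic i, u j) / k - (∑ j ∈ Iio i, u j) / k with hv
  -- sum over Iic = sum over Iio + last
  have hsum : ∀ i : Fin n, ∑ j ∈ Iic i, u j = (∑ j ∈ Iio i, u j) + u i := by
    intro i
    rw [← Finset.Iio_insert, Finset.sum_insert (by simp)]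
    ring
  have hmono : ∀ i : Fin n, (∑ j ∈ Iio i, u j) / k ≤ (∑ j ∈ Iic i, u j) / k := by
    intro i
    exact Nat.div_le_div_right (by rw [hsum i]; omega)
  -- componentwise bounds on v
  have hv1 : ∀ i, a i ≤ v i := by
    intro i
    have := plp_div_lb k (∑ j ∈ Iio i, u j) (a i) (u i) hk (hab i).1
    rw [← hsum i] at this
    simp only [hv]
    omega
  have hv2 : ∀ i, v i ≤ b i := by
    intro i
    have := plp_div_ub k (∑ j ∈ Iio i, u j) (b i) (u i) hk (hab i).2
    rw [← hsum i] at this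
    simp only [hv]
    omega
  have hvu1 : ∀ i, v i ≤ u i - m * a i := by
    intro i
    have hc : u i ≤ k * (u i - m * a i) := plp_le_mul_tsub m (u i) (a i) (hab i).1
    have := plp_div_ub k (∑ j ∈ Iio i, u j) (u i - m * a i) (u i) hk hc
    rw [← hsum i] at this
    simp only [hv]
    omega
  have hvu2 : ∀ i, u i - m * b i ≤ v i := by
    intro i
    have hc : k * (u i - m * b i) ≤ u i := plp_mul_tsub_le m (u i) (b i) (hab i).2
    have := plp_div_lb k (∑ j ∈ Iio i, u j) (u i - m * b i) (u i) hk hc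
    rw [← hsum i] at this
    simp only [hv]
    omega
  have hvle : ∀ i, v i ≤ u i := by
    intro i
    have h1 := hvu1 i
    omega
  -- telescoping: partial sums of v
  have htel : ∀ i : Fin n, ∑ j ∈ Iic i, v j = (∑ j ∈ Iic i, u j) / k := by
    have key : ∀ N : ℕ, ∀ i : Fin n, (i : ℕ) = N →
        ∑ j ∈ Iic i, v j = (∑ j ∈ Iic i, u j) / k := by
      intro N
      induction N with
      | zero =>
        intro i hi
        have h0 : Iio i = (∅ : Finset (Fin n)) := by
          ext j
          simp only [Finset.mem_Iio, Finset.notMem_empty, iff_false, Fin.lt_def, hi]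
          omega
        have h1 : Iic i = {i} := by
          ext j
          simp only [Finset.mem_Iic, Finset.mem_singleton, Fin.le_def, hi, Fin.ext_iff]
          omega
        rw [h1, Finset.sum_singleton, Finset.sum_singleton]
        simp only [hv, h1, h0, Finset.sum_singleton, Finset.sum_empty, Nat.zero_div,
          Nat.sub_zero]
      | succ N ih =>
        intro i hi
        have hN : N < n := by
          have := i.isLt
          omega
        set i' : Fin n := ⟨N, hN⟩ with hi'
        have hii : Iio i = Iic i' := by
          ext j
          simp only [Finset.mem_Iio, Finset.mem_Iic, Fin.lt_def, Fin.le_def, hi, hi']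
          omega
        have hins : Iic i = insert i (Iic i') := by
          ext j
          simp only [Finset.mem_Iic, Finset.mem_insert, Fin.le_def, hi, hi', Fin.ext_iff]
          omega
        have hnot : i ∉ Iic i' := by
          simp only [Finset.mem_Iic, Fin.le_def, hi, hi']
          omega
        have ihv : ∑ j ∈ Iic i', v j = (∑ j ∈ Iic i', u j) / k := ih i' rfl
        rw [hins, Finset.sum_insert hnot, Finset.sum_insert hnot, ihv]
        have hmono' := hmono i
        rw [hii] at hmono'
        rw [hins, Finset.sum_insert hnot] at hmono'
        have hvi : v i = (∑ j ∈ Iic i, u j) / k - (∑ j ∈ Iic i', u j) / k := by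
          simp only [hv, hii]
        rw [hins, Finset.sum_insert hnot] at hvi
        omega
    intro i
    exact key (i : ℕ) i rfl
  -- define w
  refine ⟨v, fun i => u i - v i, ?_, fun i => ⟨hv1 i, hv2 i⟩, ?_, ?_, ?_⟩
  · intro i
    show u i = v i + (u i - v i)
    have := hvle i
    omega
  · -- partial sum bounds for v
    intro i
    rw [htel i]
    constructor
    · exact (Nat.le_div_iff_mul_le hk).2 (by rw [Nat.mul_comm]; exact (hαβ i).1)
    · exact Nat.div_le_of_le_mul (hαβ i).2
  · -- componentwise bounds for w
    intro i
    show m * a i ≤ u i - v i ∧ u i - v i ≤ m * b i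
    have h1 := hvu1 i
    have h2 := hvu2 i
    have h3 := (hab i).1
    have h4 := (hab i).2
    have e1 : (m + 1) * a i = m * a i + a i := by ring
    have e2 : (m + 1) * b i = m * b i + b i := by ring
    rw [hkdef] at h3 h4
    omega
  · -- partial sum bounds for w
    intro i
    have hw : ∑ j ∈ Iic i, (u j - v j) = (∑ j ∈ Iic i, u j) - ∑ j ∈ Iic i, v j :=
      Finset.sum_tsub_distrib _ (fun j _ => hvle j)
    rw [hw, htel i]
    set s := ∑ j ∈ Iic i, u j with hs
    have hαs : α i ≤ s / k := (Nat.le_div_iff_mul_le hk).2 (by rw [Nat.mul_comm]; exact (hαβ i).1)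
    have hβs : s / k ≤ β i := Nat.div_le_of_le_mul (hαβ i).2
    have hdm : k * (s / k) ≤ s := Nat.mul_div_le s k
    constructor
    · have h5 : m * α i ≤ m * (s / k) := Nat.mul_le_mul_left _ hαs
      have e2 : k * (s / k) = m * (s / k) + (s / k) := by rw [hkdef]; ring
      omega
    · have hc : k * (s - m * β i) ≤ s := plp_mul_tsub_le m s (β i) (hαβ i).2
      have h6 : s - m * β i ≤ s / k :=
        (Nat.le_div_iff_mul_le hk).2 (by rw [Nat.mul_comm]; exact hc)
      omega

/- ### The multiplication step -/

lemma PLPideal_mul_step (K : Type*) [Field K] {n : ℕ} (m : ℕ) (a b α β : Fin n → ℕ) :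
    PLPideal K a b α β *
      PLPideal K (fun i => m * a i) (fun i => m * b i) (fun i => m * α i) (fun i => m * β i) =
    PLPideal K (fun i => (m + 1) * a i) (fun i => (m + 1) * b i)
      (fun i => (m + 1) * α i) (fun i => (m + 1) * β i) := by
  unfold PLPideal
  rw [Ideal.span_mul_span']
  apply le_antisymm
  · rw [Ideal.span_le]
    intro z hz
    rw [Set.mem_mul] at hz
    obtain ⟨x, hx, y, hy, rfl⟩ := hz
    obtain ⟨v, hv1, hv2, rfl⟩ := hx
    obtain ⟨w, hw1, hw2, rfl⟩ := hy
    apply Ideal.subset_span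
    refine ⟨fun i => v i + w i, ?_, ?_, ?_⟩
    · intro i
      show (m + 1) * a i ≤ v i + w i ∧ v i + w i ≤ (m + 1) * b i
      have h1 := hv1 i
      have h2 : m * a i ≤ w i ∧ w i ≤ m * b i := hw1 i
      have e1 : (m + 1) * a i = a i + m * a i := by ring
      have e2 : (m + 1) * b i = b i + m * b i := by ring
      omega
    · intro i
      show (m + 1) * α i ≤ ∑ j ∈ Iic i, (v j + w j) ∧ ∑ j ∈ Iic i, (v j + w j) ≤ (m + 1) * β i
      have h1 := hv2 i
      have h2 : m * α i ≤ ∑ j ∈ Iic i, w j ∧ (∑ j ∈ Iic i, w j) ≤ m * β i := hw2 i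
      rw [Finset.sum_add_distrib]
      have e1 : (m + 1) * α i = α i + m * α i := by ring
      have e2 : (m + 1) * β i = β i + m * β i := by ring
      omega
    · rw [← Finset.prod_mul_distrib]
      exact Finset.prod_congr rfl (fun i _ => (pow_add _ _ _).symm)
  · rw [Ideal.span_le]
    rintro z ⟨u, hu1, hu2, rfl⟩
    obtain ⟨v, w, huvw, hv1, hv2, hw1, hw2⟩ := plp_decomp m a b α β u hu1 hu2
    apply Ideal.subset_span
    have hprod : (∏ i, (X i : MvPolynomial (Fin n) K) ^ u i) =
        (∏ i, (X i : MvPolynomial (Fin n) K) ^ v i) *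
        (∏ i, (X i : MvPolynomial (Fin n) K) ^ w i) := by
      rw [← Finset.prod_mul_distrib]
      exact Finset.prod_congr rfl (fun i _ => by rw [← pow_add, huvw i])
    rw [hprod]
    exact Set.mul_mem_mul ⟨v, hv1, hv2, rfl⟩ ⟨w, hw1, hw2, rfl⟩

/-- powers of a PLP-polymatroidal ideal of type `(a,b|α,β)` are
the PLP-polymatroidal ideals of type `(ka, kb | kα, kβ)`. -/
theorem PLPideal_pow (K : Type*) [Field K] {n d : ℕ} (hn : 0 < n) (hd : 0 < d)
    (a b α β : Fin n → ℕ)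
    (hαm : Monotone α) (hβm : Monotone β)
    (hlast : ∀ i : Fin n, (i : ℕ) = n - 1 → α i = d ∧ β i = d)
    (hαβ : ∀ i, α i ≤ β i) :
    ∀ k : ℕ, 1 ≤ k →
      (PLPideal K a b α β) ^ k =
        PLPideal K (fun i => k * a i) (fun i => k * b i)
          (fun i => k * α i) (fun i => k * β i) := by
  intro k hk
  induction k, hk using Nat.le_induction with
  | base =>
    rw [pow_one]
    simp only [one_mul]
  | succ k hk ih =>
    rw [pow_succ, ih, mul_comm]
    exact PLPideal_mul_step K k a b α β
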